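/- There exists a constant C > 0 such that for every even integer M ≥ 4, a uniformly random perfect matching of {1,…,M} satisfies P[ max_{1 ≤ x ≤ M} | Z̄_x − x(M−x)/(M−1) | > C·M^{3/4} ] ≤ C·M^{−1/4}. -/

import Mathlib

/-- The perfect matchings of `{1,…,M}` (modelled as `Fin M`): fixed-point-free
involutions of `Fin M`. -/
def matchings (M : ℕ) : Finset (Fin M → Fin M) :=
  Finset.univ.filter (fun ξ => (∀ i, ξ (ξ i) = i) ∧ ∀ i, ξ i ≠ i)

/-- `Z_x` : the number of elements of the first `x` points that are matched with
one of the first `x` points. -/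
def Zcard (M : ℕ) (x : ℕ) (ξ : Fin M → Fin M) : ℕ :=
  (Finset.univ.filter (fun i : Fin M => (i : ℕ) < x ∧ ((ξ i : Fin M) : ℕ) < x)).card

namespace Stmt8Aux

open Finset

variable {M : ℕ}

lemma mem_matchings {ξ : Fin M → Fin M} :
    ξ ∈ matchings M ↔ (∀ i, ξ (ξ i) = i) ∧ ∀ i, ξ i ≠ i := by
  simp [matchings]

lemma matchings_inj {ξ : Fin M → Fin M} (h : ξ ∈ matchings M) : Function.Injective ξ := by
  rw [mem_matchings] at h
  exact Function.LeftInverse.injective h.1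

lemma conj_mem (σ : Equiv.Perm (Fin M)) {ξ : Fin M → Fin M} (h : ξ ∈ matchings M) :
    (fun i => σ (ξ (σ.symm i))) ∈ matchings M := by
  rw [mem_matchings] at h ⊢
  constructor
  · intro i; simp [h.1]
  · intro i hi
    apply h.2 (σ.symm i)
    have := congrArg σ.symm hi
    simpa using this

/-- count of matchings with `ξ i = k`. -/
def ec (M : ℕ) (i k : Fin M) : ℕ := ((matchings M).filter (fun ξ => ξ i = k)).card

/-- count of matchings with `ξ i = k` and `ξ j = l`. -/
def eec (M : ℕ) (i j k l : Fin M) : ℕ :=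
  ((matchings M).filter (fun ξ => ξ i = k ∧ ξ j = l)).card

lemma ec_conj (σ : Equiv.Perm (Fin M)) (i k : Fin M) : ec M i k = ec M (σ i) (σ k) := by
  apply Finset.card_nbij' (fun ξ => fun a => σ (ξ (σ.symm a))) (fun ξ => fun a => σ.symm (ξ (σ a)))
  · intro ξ hξ
    rw [mem_coe, mem_filter] at hξ ⊢
    refine ⟨conj_mem σ hξ.1, ?_⟩
    simp [hξ.2]
  · intro ξ hξ
    rw [mem_coe, mem_filter] at hξ ⊢
    refine ⟨by simpa using conj_mem σ.symm hξ.1, ?_⟩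
    simp [hξ.2]
  · intro ξ _; funext a; simp
  · intro ξ _; funext a; simp

lemma eec_conj (σ : Equiv.Perm (Fin M)) (i j k l : Fin M) :
    eec M i j k l = eec M (σ i) (σ j) (σ k) (σ l) := by
  apply Finset.card_nbij' (fun ξ => fun a => σ (ξ (σ.symm a))) (fun ξ => fun a => σ.symm (ξ (σ a)))
  · intro ξ hξ
    rw [mem_coe, mem_filter] at hξ ⊢
    refine ⟨conj_mem σ hξ.1, ?_⟩
    simp [hξ.2.1, hξ.2.2]
  · intro ξ hξ
    rw [mem_coe, mem_filter] at hξ ⊢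
    refine ⟨by simpa using conj_mem σ.symm hξ.1, ?_⟩
    simp [hξ.2.1, hξ.2.2]
  · intro ξ _; funext a; simp
  · intro ξ _; funext a; simp

lemma exists_perm_pair {α : Type*} [DecidableEq α] {a b a' b' : α} (h : a ≠ b) (h' : a' ≠ b') :
    ∃ σ : Equiv.Perm α, σ a = a' ∧ σ b = b' := by
  refine ⟨(Equiv.swap a a').trans (Equiv.swap (Equiv.swap a a' b) b'), ?_, ?_⟩
  · simp only [Equiv.trans_apply, Equiv.swap_apply_left]
    apply Equiv.swap_apply_of_ne_of_ne
    · intro hc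
      exact h (Equiv.injective _ (by rw [Equiv.swap_apply_left]; exact hc))
    · exact h'
  · simp only [Equiv.trans_apply, Equiv.swap_apply_left]

lemma exists_perm_quad {α : Type*} [DecidableEq α] {a b c d a' b' c' d' : α}
    (hab : a ≠ b) (hac : a ≠ c) (had : a ≠ d) (hbc : b ≠ c) (hbd : b ≠ d) (hcd : c ≠ d)
    (hab' : a' ≠ b') (hac' : a' ≠ c') (had' : a' ≠ d') (hbc' : b' ≠ c') (hbd' : b' ≠ d')
    (hcd' : c' ≠ d') :
    ∃ σ : Equiv.Perm α, σ a = a' ∧ σ b = b' ∧ σ c = c' ∧ σ d = d' := by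
  set σ1 := Equiv.swap a a' with hσ1
  set σ2 := Equiv.swap (σ1 b) b' with hσ2
  set σ3 := Equiv.swap (σ2 (σ1 c)) c' with hσ3
  set σ4 := Equiv.swap (σ3 (σ2 (σ1 d))) d' with hσ4
  have h1a : σ1 a = a' := Equiv.swap_apply_left a a'
  have h2a : σ2 a' = a' := by
    apply Equiv.swap_apply_of_ne_of_ne
    · intro hc; exact hab (σ1.injective (by rw [← hc, h1a]))
    · exact hab'
  have h2b : σ2 (σ1 b) = b' := Equiv.swap_apply_left _ _
  have h3a : σ3 a' = a' := by
    apply Equiv.swap_apply_of_ne_of_ne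
    · intro hc; exact hac (σ1.injective (σ2.injective (by rw [← hc, h1a, h2a])))
    · exact hac'
  have h3b : σ3 b' = b' := by
    apply Equiv.swap_apply_of_ne_of_ne
    · intro hc; exact hbc (σ1.injective (σ2.injective (by rw [← hc, h2b])))
    · exact hbc'
  have h3c : σ3 (σ2 (σ1 c)) = c' := Equiv.swap_apply_left _ _
  have h4a : σ4 a' = a' := by
    apply Equiv.swap_apply_of_ne_of_ne
    · intro hc
      exact had (σ1.injective (σ2.injective (σ3.injective (by rw [← hc, h1a, h2a, h3a]))))
    · exact had'
  have h4b : σ4 b' = b' := by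
    apply Equiv.swap_apply_of_ne_of_ne
    · intro hc
      exact hbd (σ1.injective (σ2.injective (σ3.injective (by rw [← hc, h2b, h3b]))))
    · exact hbd'
  have h4c : σ4 c' = c' := by
    apply Equiv.swap_apply_of_ne_of_ne
    · intro hc
      exact hcd (σ1.injective (σ2.injective (σ3.injective (by rw [← hc, h3c]))))
    · exact hcd'
  have h4d : σ4 (σ3 (σ2 (σ1 d))) = d' := Equiv.swap_apply_left _ _
  refine ⟨σ1.trans (σ2.trans (σ3.trans σ4)), ?_, ?_, ?_, ?_⟩ <;>
    simp only [Equiv.trans_apply]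
  · rw [h1a, h2a, h3a, h4a]
  · rw [h2b, h3b, h4b]
  · rw [h3c, h4c]
  · rw [h4d]

lemma ec_const {i k i' k' : Fin M} (h : i ≠ k) (h' : i' ≠ k') : ec M i k = ec M i' k' := by
  obtain ⟨σ, h1, h2⟩ := exists_perm_pair h h'
  rw [ec_conj σ i k, h1, h2]

lemma eec_const {i j k l i' j' k' l' : Fin M}
    (hij : i ≠ j) (hik : i ≠ k) (hil : i ≠ l) (hjk : j ≠ k) (hjl : j ≠ l) (hkl : k ≠ l)
    (hij' : i' ≠ j') (hik' : i' ≠ k') (hil' : i' ≠ l') (hjk' : j' ≠ k') (hjl' : j' ≠ l')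
    (hkl' : k' ≠ l') :
    eec M i j k l = eec M i' j' k' l' := by
  obtain ⟨σ, h1, h2, h3, h4⟩ := exists_perm_quad hij hik hil hjk hjl hkl hij' hik' hil' hjk'
    hjl' hkl'
  rw [eec_conj σ, h1, h2, h3, h4]


lemma sum_ec (i : Fin M) : ∑ k ∈ univ.erase i, ec M i k = (matchings M).card := by
  rw [Finset.card_eq_sum_card_fiberwise (f := fun ξ => ξ i) (t := univ.erase i)]
  · rfl
  · intro ξ hξ
    rw [mem_coe, mem_matchings] at hξ
    simp [hξ.2 i]

lemma ec_mul {i k : Fin M} (h : i ≠ k) : (M - 1) * ec M i k = (matchings M).card := by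
  rw [← sum_ec i]
  have hcongr : ∑ k' ∈ univ.erase i, ec M i k' = ∑ _k' ∈ univ.erase i, ec M i k :=
    Finset.sum_congr rfl (fun k' hk' => ec_const (Ne.symm (mem_erase.mp hk').1) h)
  rw [hcongr, Finset.sum_const, smul_eq_mul, card_erase_of_mem (mem_univ i), card_univ,
    Fintype.card_fin]

lemma sum_eec {i j : Fin M} (hij : i ≠ j) :
    (matchings M).card
      = ec M i j + ∑ p ∈ ((univ.erase i).erase j).offDiag, eec M i j p.1 p.2 := by
  have hji : j ∉ (univ.erase i).erase j := by simp
  have hnotmem : ((j : Fin M), (i : Fin M)) ∉ ((univ.erase i).erase j).offDiag := by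
    intro hc
    rw [mem_offDiag] at hc
    exact hji hc.1
  rw [Finset.card_eq_sum_card_fiberwise (f := fun ξ => (ξ i, ξ j))
      (t := insert (j, i) ((univ.erase i).erase j).offDiag)]
  · rw [Finset.sum_insert hnotmem]
    congr 1
    · -- fiber at (j,i) equals ec i j
      rw [ec]
      apply Finset.card_nbij' id id
      · intro ξ hξ
        rw [mem_coe, mem_filter] at hξ ⊢
        have := (Prod.ext_iff.mp hξ.2)
        exact ⟨hξ.1, this.1⟩
      · intro ξ hξ
        rw [mem_coe, mem_filter] at hξ ⊢
        refine ⟨hξ.1, ?_⟩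
        have hinv := (mem_matchings.mp hξ.1).1 i
        rw [hξ.2] at hinv
        exact Prod.ext hξ.2 hinv
      · intro _ _; rfl
      · intro _ _; rfl
    · apply Finset.sum_congr rfl
      intro p hp
      rw [eec]
      congr 1
      apply Finset.filter_congr
      intro ξ _
      simp [Prod.ext_iff]
  · intro ξ hξ
    have h1 := (mem_matchings.mp hξ).1
    have h2 := (mem_matchings.mp hξ).2
    by_cases hc : ξ i = j
    · have : ξ j = i := by rw [← hc, h1]
      simp [hc, this]
    · rw [mem_coe, mem_insert, mem_offDiag]
      right
      have hξj_ne_i : ξ j ≠ i := fun hc2 => hc (by rw [← hc2, h1])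
      refine ⟨?_, ?_, ?_⟩
      · rw [mem_erase, mem_erase]
        exact ⟨hc, h2 i, mem_univ _⟩
      · rw [mem_erase, mem_erase]
        exact ⟨h2 j, hξj_ne_i, mem_univ _⟩
      · intro hc2
        exact hij (matchings_inj hξ hc2)

lemma eec_mul (hM : 4 ≤ M) {i j k l : Fin M}
    (hij : i ≠ j) (hik : i ≠ k) (hil : i ≠ l) (hjk : j ≠ k) (hjl : j ≠ l) (hkl : k ≠ l) :
    (M - 1) * ((M - 3) * eec M i j k l) = (matchings M).card := by
  have hcard : (((univ.erase i).erase j)).card = M - 2 := by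
    rw [card_erase_of_mem (by simp [hij.symm]), card_erase_of_mem (by simp), card_univ,
      Fintype.card_fin]
    omega
  have hsum := sum_eec (M := M) hij
  have hconst : ∑ p ∈ ((univ.erase i).erase j).offDiag, eec M i j p.1 p.2
      = (M - 2) * ((M - 3) * eec M i j k l) := by
    have hcongr : ∑ p ∈ ((univ.erase i).erase j).offDiag, eec M i j p.1 p.2
        = ∑ _p ∈ ((univ.erase i).erase j).offDiag, eec M i j k l := by
      apply Finset.sum_congr rfl
      intro p hp
      rw [mem_offDiag] at hp
      obtain ⟨hp1, hp2, hp3⟩ := hp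
      rw [mem_erase, mem_erase] at hp1 hp2
      exact eec_const hij (Ne.symm hp1.2.1) (Ne.symm hp2.2.1) (Ne.symm hp1.1) (Ne.symm hp2.1)
        hp3 hij hik hil hjk hjl hkl
    rw [hcongr, Finset.sum_const, smul_eq_mul, Finset.offDiag_card, hcard]
    have hsq : (M - 2) * (M - 2) - (M - 2) = (M - 2) * (M - 3) := by
      have hk : M - 3 = (M - 2) - 1 := by omega
      rw [hk]
      cases' hkk : M - 2 with n
      · simp
      · rw [Nat.succ_sub_one, Nat.mul_succ, Nat.add_sub_cancel]
    rw [hsq]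
    ring
  have hec : (M - 1) * ec M i j = (matchings M).card := ec_mul hij
  -- (M-1)*m = (M-1)*ec + (M-1)*(M-2)*X where X = (M-3)*eec
  set X := (M - 3) * eec M i j k l with hX
  rw [hconst] at hsum
  have h2 : (M - 1) * (matchings M).card
      = (matchings M).card + (M - 1) * ((M - 2) * X) := by
    calc (M - 1) * (matchings M).card = (M-1) * (ec M i j + (M-2)*X) := by rw [← hsum]
    _ = (M-1) * ec M i j + (M-1)*((M-2)*X) := by ring
    _ = (matchings M).card + (M-1)*((M-2)*X) := by rw [hec]
  have h3 : (M - 2) * ((M - 1) * X) = (M - 2) * (matchings M).card := by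
    have e1 : (M - 1) * (matchings M).card
        = (matchings M).card + (M - 2) * (matchings M).card := by
      have : M - 1 = 1 + (M - 2) := by omega
      rw [this]; ring
    rw [e1] at h2
    have hcan := Nat.add_left_cancel h2
    rw [hcan]; ring
  have h4 := Nat.eq_of_mul_eq_mul_left (show 0 < M - 2 by omega) h3
  exact h4


def Zbar (M x : ℕ) (ξ : Fin M → Fin M) : ℕ :=
  (Finset.univ.filter (fun i : Fin M => (i : ℕ) < x ∧ x ≤ ((ξ i : Fin M) : ℕ))).card

lemma card_I {x : ℕ} (hx : x ≤ M) :
    (univ.filter (fun i : Fin M => (i : ℕ) < x)).card = x := by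
  have h : (univ.filter (fun i : Fin M => (i : ℕ) < x)).card = (Finset.range x).card := by
    refine Finset.card_bij' (fun i _ => (i : ℕ))
      (fun n hn => (⟨n, lt_of_lt_of_le (mem_range.mp hn) hx⟩ : Fin M)) ?_ ?_ ?_ ?_
    · intro a ha
      exact mem_range.mpr (mem_filter.mp ha).2
    · intro n hn
      exact mem_filter.mpr ⟨mem_univ _, mem_range.mp hn⟩
    · intro a _; exact Fin.ext rfl
    · intro n _; rfl
  rw [h, Finset.card_range]

lemma card_K {x : ℕ} (hx : x ≤ M) :
    (univ.filter (fun k : Fin M => x ≤ (k : ℕ))).card = M - x := by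
  have h := Finset.card_filter_add_card_filter_not
    (s := (univ : Finset (Fin M))) (p := fun i : Fin M => (i : ℕ) < x)
  simp only [not_lt] at h
  rw [card_univ, Fintype.card_fin, card_I hx] at h
  omega

lemma Zcard_add_Zbar {x : ℕ} (hx : x ≤ M) (ξ : Fin M → Fin M) :
    Zcard M x ξ + Zbar M x ξ = x := by
  have h1 : Zcard M x ξ
      = ((univ.filter (fun i : Fin M => (i : ℕ) < x)).filter
          (fun i => ((ξ i : Fin M) : ℕ) < x)).card := by
    rw [Zcard, Finset.filter_filter]
  have h2 : Zbar M x ξ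
      = ((univ.filter (fun i : Fin M => (i : ℕ) < x)).filter
          (fun i => ¬ ((ξ i : Fin M) : ℕ) < x)).card := by
    rw [Zbar, Finset.filter_filter]
    congr 1
    apply Finset.filter_congr
    intro i _
    simp [not_lt]
  rw [h1, h2, Finset.card_filter_add_card_filter_not, card_I hx]

lemma L1 (hx : x ≤ M) {i : Fin M} (hi : (i : ℕ) < x) :
    (M - 1) * ((matchings M).filter (fun ξ => x ≤ ((ξ i : Fin M) : ℕ))).card
      = (M - x) * (matchings M).card := by
  rw [Finset.card_eq_sum_card_fiberwise (f := fun ξ => ξ i)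
      (s := (matchings M).filter (fun ξ => x ≤ ((ξ i : Fin M) : ℕ)))
      (t := univ.filter (fun k : Fin M => x ≤ (k : ℕ)))
      (fun ξ hξ => mem_filter.mpr ⟨mem_univ _, (mem_filter.mp hξ).2⟩)]
  have hfib : ∀ k ∈ univ.filter (fun k : Fin M => x ≤ (k : ℕ)),
      (((matchings M).filter (fun ξ => x ≤ ((ξ i : Fin M) : ℕ))).filter
        (fun ξ => ξ i = k)).card = ec M i k := by
    intro k hk
    rw [ec, Finset.filter_filter]
    congr 1
    apply Finset.filter_congr
    intro ξ _
    constructor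
    · rintro ⟨_, h2⟩; exact h2
    · rintro h2
      refine ⟨?_, h2⟩
      rw [h2]; exact (mem_filter.mp hk).2
  rw [Finset.mul_sum]
  have hkey : ∀ k ∈ univ.filter (fun k : Fin M => x ≤ (k : ℕ)),
      (M - 1) * (((matchings M).filter (fun ξ => x ≤ ((ξ i : Fin M) : ℕ))).filter
        (fun ξ => ξ i = k)).card = (matchings M).card := by
    intro k hk
    rw [hfib k hk]
    apply ec_mul
    intro hc
    have := (mem_filter.mp hk).2
    rw [← hc] at this
    omega
  rw [Finset.sum_congr rfl hkey, Finset.sum_const, smul_eq_mul, card_K hx]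

lemma L2 (hM : 4 ≤ M) (hx : x ≤ M) {i j : Fin M} (hi : (i : ℕ) < x) (hj : (j : ℕ) < x)
    (hij : i ≠ j) :
    (M - 1) * ((M - 3) *
      ((matchings M).filter
        (fun ξ => x ≤ ((ξ i : Fin M) : ℕ) ∧ x ≤ ((ξ j : Fin M) : ℕ))).card)
      = (M - x) * ((M - x - 1) * (matchings M).card) := by
  set K := univ.filter (fun k : Fin M => x ≤ (k : ℕ)) with hK
  rw [Finset.card_eq_sum_card_fiberwise (f := fun ξ => (ξ i, ξ j)) (t := K.offDiag) ?_]
  · have hfib : ∀ p ∈ K.offDiag,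
        (((matchings M).filter
          (fun ξ => x ≤ ((ξ i : Fin M) : ℕ) ∧ x ≤ ((ξ j : Fin M) : ℕ))).filter
          (fun ξ => (ξ i, ξ j) = p)).card = eec M i j p.1 p.2 := by
      intro p hp
      rw [mem_offDiag] at hp
      rw [eec, Finset.filter_filter]
      congr 1
      apply Finset.filter_congr
      intro ξ _
      rw [Prod.ext_iff]
      constructor
      · rintro ⟨_, h2⟩; exact h2
      · rintro ⟨h2, h3⟩
        refine ⟨⟨?_, ?_⟩, h2, h3⟩
        · rw [h2]; exact (mem_filter.mp hp.1).2
        · rw [h3]; exact (mem_filter.mp hp.2.1).2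
    have hval : ∀ p ∈ K.offDiag,
        (M - 1) * ((M - 3) * eec M i j p.1 p.2) = (matchings M).card := by
      intro p hp
      rw [mem_offDiag] at hp
      have hk := (mem_filter.mp hp.1).2
      have hl := (mem_filter.mp hp.2.1).2
      apply eec_mul hM hij
      · intro hc; rw [← hc] at hk; omega
      · intro hc; rw [← hc] at hl; omega
      · intro hc; rw [← hc] at hk; omega
      · intro hc; rw [← hc] at hl; omega
      · exact hp.2.2
    rw [Finset.mul_sum, Finset.sum_congr rfl (fun p hp => by rw [hfib p hp])]
    rw [Finset.mul_sum, Finset.sum_congr rfl (fun p hp => hval p hp)]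
    rw [Finset.sum_const, smul_eq_mul, Finset.offDiag_card]
    have hKcard : K.card = M - x := card_K hx
    rw [hKcard]
    have : (M - x) * (M - x) - (M - x) = (M - x) * (M - x - 1) := by
      cases' hkk : M - x with n
      · simp
      · rw [Nat.succ_sub_one, Nat.mul_succ, Nat.add_sub_cancel]
    rw [this, mul_assoc]
  · intro ξ hξ
    have hmem := (mem_filter.mp hξ).1
    have hcond := (mem_filter.mp hξ).2
    rw [mem_coe, mem_offDiag]
    refine ⟨mem_filter.mpr ⟨mem_univ _, hcond.1⟩, mem_filter.mpr ⟨mem_univ _, hcond.2⟩, ?_⟩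
    intro hc
    exact hij (matchings_inj hmem hc)

lemma S1 (hx : x ≤ M) :
    (M - 1) * ∑ ξ ∈ matchings M, Zbar M x ξ = x * ((M - x) * (matchings M).card) := by
  have hZ : ∀ ξ : Fin M → Fin M, Zbar M x ξ
      = ∑ i ∈ univ.filter (fun i : Fin M => (i : ℕ) < x),
          if x ≤ ((ξ i : Fin M) : ℕ) then 1 else 0 := by
    intro ξ
    rw [Zbar, ← Finset.filter_filter, Finset.card_filter]
  calc (M - 1) * ∑ ξ ∈ matchings M, Zbar M x ξ
      = (M - 1) * ∑ i ∈ univ.filter (fun i : Fin M => (i : ℕ) < x),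
          ∑ ξ ∈ matchings M, if x ≤ ((ξ i : Fin M) : ℕ) then 1 else 0 := by
        rw [Finset.sum_congr rfl (fun ξ _ => hZ ξ), Finset.sum_comm]
    _ = ∑ i ∈ univ.filter (fun i : Fin M => (i : ℕ) < x),
          (M - 1) * ((matchings M).filter (fun ξ => x ≤ ((ξ i : Fin M) : ℕ))).card := by
        rw [Finset.mul_sum]
        apply Finset.sum_congr rfl
        intro i _
        rw [← Finset.card_filter]
    _ = ∑ i ∈ univ.filter (fun i : Fin M => (i : ℕ) < x), (M - x) * (matchings M).card := by
        apply Finset.sum_congr rfl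
        intro i hi
        exact L1 hx (mem_filter.mp hi).2
    _ = x * ((M - x) * (matchings M).card) := by
        rw [Finset.sum_const, smul_eq_mul, card_I hx]

lemma S2 (hM : 4 ≤ M) (hx : x ≤ M) :
    (M - 1) * ((M - 3) * ∑ ξ ∈ matchings M, (Zbar M x ξ) * (Zbar M x ξ))
      = (M - 3) * (x * ((M - x) * (matchings M).card))
        + (x * (x-1)) * ((M - x) * ((M - x - 1) * (matchings M).card)) := by
  set I := univ.filter (fun i : Fin M => (i : ℕ) < x) with hI
  have hZ : ∀ ξ : Fin M → Fin M, Zbar M x ξ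
      = ∑ i ∈ I, if x ≤ ((ξ i : Fin M) : ℕ) then 1 else 0 := by
    intro ξ
    rw [Zbar, ← Finset.filter_filter, Finset.card_filter]
  have hsq : ∀ ξ : Fin M → Fin M, (Zbar M x ξ) * (Zbar M x ξ)
      = ∑ p ∈ I ×ˢ I,
          if x ≤ ((ξ p.1 : Fin M) : ℕ) ∧ x ≤ ((ξ p.2 : Fin M) : ℕ) then 1 else 0 := by
    intro ξ
    rw [hZ, Finset.sum_mul_sum, Finset.sum_product]
    apply Finset.sum_congr rfl; intro i _
    apply Finset.sum_congr rfl; intro j _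
    by_cases h1 : x ≤ ((ξ i : Fin M) : ℕ) <;> by_cases h2 : x ≤ ((ξ j : Fin M) : ℕ) <;>
      simp [h1, h2]
  have hswap : ∑ ξ ∈ matchings M, (Zbar M x ξ) * (Zbar M x ξ)
      = ∑ p ∈ I ×ˢ I,
          ((matchings M).filter
            (fun ξ => x ≤ ((ξ p.1 : Fin M) : ℕ) ∧ x ≤ ((ξ p.2 : Fin M) : ℕ))).card := by
    rw [Finset.sum_congr rfl (fun ξ _ => hsq ξ), Finset.sum_comm]
    apply Finset.sum_congr rfl
    intro p _
    rw [← Finset.card_filter]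
  rw [hswap]
  rw [← Finset.diag_union_offDiag I, Finset.sum_union (Finset.disjoint_diag_offDiag I)]
  have hdiag : ∑ p ∈ I.diag,
      ((matchings M).filter
        (fun ξ => x ≤ ((ξ p.1 : Fin M) : ℕ) ∧ x ≤ ((ξ p.2 : Fin M) : ℕ))).card
      = ∑ i ∈ I, ((matchings M).filter (fun ξ => x ≤ ((ξ i : Fin M) : ℕ))).card := by
    rw [Finset.sum_diag]
    apply Finset.sum_congr rfl
    intro i _
    congr 1
    apply Finset.filter_congr
    intro ξ _
    simp
  have hd : (M - 1) * ∑ i ∈ I, ((matchings M).filter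
      (fun ξ => x ≤ ((ξ i : Fin M) : ℕ))).card = x * ((M - x) * (matchings M).card) := by
    rw [Finset.mul_sum]
    have hkey : ∀ i ∈ I, (M - 1) * ((matchings M).filter
        (fun ξ => x ≤ ((ξ i : Fin M) : ℕ))).card = (M - x) * (matchings M).card := by
      intro i hi
      exact L1 hx (mem_filter.mp hi).2
    rw [Finset.sum_congr rfl hkey, Finset.sum_const, smul_eq_mul, hI, card_I hx]
  have ho : (M - 1) * ((M - 3) * ∑ p ∈ I.offDiag, ((matchings M).filter
        (fun ξ => x ≤ ((ξ p.1 : Fin M) : ℕ) ∧ x ≤ ((ξ p.2 : Fin M) : ℕ))).card)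
      = (x * (x - 1)) * ((M - x) * ((M - x - 1) * (matchings M).card)) := by
    rw [Finset.mul_sum, Finset.mul_sum]
    have hkey : ∀ p ∈ I.offDiag, (M - 1) * ((M - 3) * ((matchings M).filter
        (fun ξ => x ≤ ((ξ p.1 : Fin M) : ℕ) ∧ x ≤ ((ξ p.2 : Fin M) : ℕ))).card)
        = (M - x) * ((M - x - 1) * (matchings M).card) := by
      intro p hp
      rw [mem_offDiag] at hp
      exact L2 hM hx (mem_filter.mp hp.1).2 (mem_filter.mp hp.2.1).2 hp.2.2
    rw [Finset.sum_congr rfl hkey, Finset.sum_const, smul_eq_mul, Finset.offDiag_card,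
      hI, card_I hx]
    have : x * x - x = x * (x - 1) := by
      cases' hkk : x with n
      · simp
      · rw [Nat.succ_sub_one, Nat.mul_succ, Nat.add_sub_cancel]
    rw [this]
  calc (M - 1) * ((M - 3) *
        (∑ p ∈ I.diag, ((matchings M).filter
          (fun ξ => x ≤ ((ξ p.1 : Fin M) : ℕ) ∧ x ≤ ((ξ p.2 : Fin M) : ℕ))).card
        + ∑ p ∈ I.offDiag, ((matchings M).filter
          (fun ξ => x ≤ ((ξ p.1 : Fin M) : ℕ) ∧ x ≤ ((ξ p.2 : Fin M) : ℕ))).card))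
      = (M - 3) * ((M - 1) * ∑ i ∈ I, ((matchings M).filter
          (fun ξ => x ≤ ((ξ i : Fin M) : ℕ))).card)
        + (M - 1) * ((M - 3) * ∑ p ∈ I.offDiag, ((matchings M).filter
          (fun ξ => x ≤ ((ξ p.1 : Fin M) : ℕ) ∧ x ≤ ((ξ p.2 : Fin M) : ℕ))).card) := by
        rw [hdiag]; ring
    _ = (M - 3) * (x * ((M - x) * (matchings M).card))
        + (x * (x-1)) * ((M - x) * ((M - x - 1) * (matchings M).card)) := by
        rw [hd, ho]

lemma matchings_nonempty (hM : 2 ≤ M) (hEven : Even M) : (matchings M).Nonempty := by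
  obtain ⟨c, rfl⟩ := hEven
  refine ⟨fun i => ⟨if (i : ℕ) % 2 = 0 then (i : ℕ) + 1 else (i : ℕ) - 1, by
    have := i.isLt
    split_ifs with h <;> omega⟩, ?_⟩
  rw [mem_matchings]
  constructor
  · intro i
    apply Fin.ext
    have hi := i.isLt
    simp only
    split_ifs with h1 h2 h2 <;> omega
  · intro i hi
    have := congrArg Fin.val hi
    have hi2 := i.isLt
    simp only at this
    split_ifs at this <;> omega

lemma Zcard_mono (ξ : Fin M → Fin M) {x y : ℕ} (hxy : x ≤ y) :
    Zcard M x ξ ≤ Zcard M y ξ := by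
  apply Finset.card_le_card
  intro i hi
  simp only [mem_filter, mem_univ, true_and] at hi ⊢
  omega

lemma Zcard_upper {ξ : Fin M → Fin M} (hξ : ξ ∈ matchings M) {x y : ℕ} (hxy : x ≤ y) :
    Zcard M y ξ ≤ Zcard M x ξ + ((y - x) + (y - x)) := by
  classical
  have hsub : univ.filter (fun i : Fin M => (i : ℕ) < y ∧ ((ξ i : Fin M) : ℕ) < y)
      ⊆ ((univ.filter (fun i : Fin M => (i : ℕ) < x ∧ ((ξ i : Fin M) : ℕ) < x))
        ∪ (univ.filter (fun i : Fin M => x ≤ (i : ℕ) ∧ (i : ℕ) < y)))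
        ∪ (univ.filter (fun i : Fin M => x ≤ ((ξ i : Fin M) : ℕ) ∧ ((ξ i : Fin M) : ℕ) < y)) := by
    intro i hi
    simp only [mem_filter, mem_union, mem_univ, true_and] at hi ⊢
    omega
  have hA : (univ.filter (fun i : Fin M => x ≤ (i : ℕ) ∧ (i : ℕ) < y)).card ≤ y - x := by
    have := Finset.card_le_card_of_injOn (fun i : Fin M => (i : ℕ))
      (s := univ.filter (fun i : Fin M => x ≤ (i : ℕ) ∧ (i : ℕ) < y))
      (t := Finset.Ico x y) ?_ ?_
    · rwa [Nat.card_Ico] at this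
    · intro a ha
      simp only [mem_coe, mem_filter] at ha
      exact Finset.mem_Ico.mpr ha.2
    · exact Fin.val_injective.injOn
  have hB : (univ.filter
      (fun i : Fin M => x ≤ ((ξ i : Fin M) : ℕ) ∧ ((ξ i : Fin M) : ℕ) < y)).card ≤ y - x := by
    have := Finset.card_le_card_of_injOn (fun i : Fin M => ((ξ i : Fin M) : ℕ))
      (s := univ.filter
        (fun i : Fin M => x ≤ ((ξ i : Fin M) : ℕ) ∧ ((ξ i : Fin M) : ℕ) < y))
      (t := Finset.Ico x y) ?_ ?_
    · rwa [Nat.card_Ico] at this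
    · intro a ha
      simp only [mem_coe, mem_filter] at ha
      exact Finset.mem_Ico.mpr ha.2
    · exact (Fin.val_injective.comp (matchings_inj hξ)).injOn
  calc Zcard M y ξ ≤ _ := Finset.card_le_card hsub
    _ ≤ _ + (univ.filter
        (fun i : Fin M => x ≤ ((ξ i : Fin M) : ℕ) ∧ ((ξ i : Fin M) : ℕ) < y)).card :=
      Finset.card_union_le _ _
    _ ≤ Zcard M x ξ + ((y - x) + (y - x)) := by
      have h2 := Finset.card_union_le
        (univ.filter (fun i : Fin M => (i : ℕ) < x ∧ ((ξ i : Fin M) : ℕ) < x))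
        (univ.filter (fun i : Fin M => x ≤ (i : ℕ) ∧ (i : ℕ) < y))
      rw [Zcard]
      omega

lemma D_lip (hM : 2 ≤ M) {ξ : Fin M → Fin M} (hξ : ξ ∈ matchings M) {x y : ℕ}
    (hxy : x ≤ y) (hyM : y ≤ M) :
    |(((y : ℝ) - (Zcard M y ξ : ℝ)) - (y : ℝ) * ((M : ℝ) - (y : ℝ)) / ((M : ℝ) - 1))
      - (((x : ℝ) - (Zcard M x ξ : ℝ)) - (x : ℝ) * ((M : ℝ) - (x : ℝ)) / ((M : ℝ) - 1))|
      ≤ 2 * ((y : ℝ) - (x : ℝ)) := by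
  have hb1 : (1 : ℝ) < (M : ℝ) := by exact_mod_cast hM
  have h1 : (Zcard M x ξ : ℝ) ≤ (Zcard M y ξ : ℝ) := by exact_mod_cast Zcard_mono ξ hxy
  have h2 : (Zcard M y ξ : ℝ) ≤ (Zcard M x ξ : ℝ) + 2 * ((y : ℝ) - (x : ℝ)) := by
    have := Zcard_upper hξ hxy
    have hc : ((y - x : ℕ) : ℝ) = (y : ℝ) - (x : ℝ) := by
      rw [Nat.cast_sub hxy]
    have := (Nat.cast_le (α := ℝ)).mpr this
    push_cast at this
    rw [Nat.cast_sub hxy] at this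
    linarith
  have hZ : |((y : ℝ) - (Zcard M y ξ : ℝ)) - ((x : ℝ) - (Zcard M x ξ : ℝ))|
      ≤ (y : ℝ) - (x : ℝ) := by
    rw [abs_le]
    constructor <;> linarith
  have hmu : |(y : ℝ) * ((M : ℝ) - (y : ℝ)) / ((M : ℝ) - 1)
      - (x : ℝ) * ((M : ℝ) - (x : ℝ)) / ((M : ℝ) - 1)| ≤ (y : ℝ) - (x : ℝ) := by
    rcases eq_or_lt_of_le hxy with heq | hlt
    · subst heq; simp
    · have hy1' : 1 ≤ y := by omega
      have hy1 : (1 : ℝ) ≤ (y : ℝ) := by exact_mod_cast hy1'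
      have hxM : (x : ℝ) ≤ (M : ℝ) - 1 := by
        have : x + 1 ≤ M := le_trans hlt hyM
        have : ((x : ℝ) + 1) ≤ (M : ℝ) := by exact_mod_cast this
        linarith
      have hyb : (y : ℝ) ≤ (M : ℝ) := by exact_mod_cast hyM
      have hxy' : (x : ℝ) < (y : ℝ) := by exact_mod_cast hlt
      have hd : (0 : ℝ) < (M : ℝ) - 1 := by linarith
      have heq : (y : ℝ) * ((M : ℝ) - (y : ℝ)) / ((M : ℝ) - 1)
          - (x : ℝ) * ((M : ℝ) - (x : ℝ)) / ((M : ℝ) - 1)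
          = (((y : ℝ) - (x : ℝ)) * ((M : ℝ) - (x : ℝ) - (y : ℝ))) / ((M : ℝ) - 1) := by
        field_simp
        ring
      rw [heq, abs_div, abs_of_pos hd, div_le_iff₀ hd, abs_mul,
        abs_of_pos (by linarith : (0:ℝ) < (y : ℝ) - (x : ℝ))]
      have habs : |(M : ℝ) - (x : ℝ) - (y : ℝ)| ≤ (M : ℝ) - 1 := by
        rw [abs_le]
        constructor <;> linarith
      have := mul_le_mul_of_nonneg_left habs (by linarith : (0:ℝ) ≤ (y : ℝ) - (x : ℝ))
      linarith
  have hre : (((y : ℝ) - (Zcard M y ξ : ℝ)) - (y : ℝ) * ((M : ℝ) - (y : ℝ)) / ((M : ℝ) - 1))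
      - (((x : ℝ) - (Zcard M x ξ : ℝ)) - (x : ℝ) * ((M : ℝ) - (x : ℝ)) / ((M : ℝ) - 1))
      = (((y : ℝ) - (Zcard M y ξ : ℝ)) - ((x : ℝ) - (Zcard M x ξ : ℝ)))
        - ((y : ℝ) * ((M : ℝ) - (y : ℝ)) / ((M : ℝ) - 1)
          - (x : ℝ) * ((M : ℝ) - (x : ℝ)) / ((M : ℝ) - 1)) := by ring
  rw [hre]
  calc |_ - _| ≤ _ + _ := abs_sub _ _
    _ ≤ 2 * ((y : ℝ) - (x : ℝ)) := by linarith


lemma Zbar_cast {x : ℕ} (hx : x ≤ M) (ξ : Fin M → Fin M) :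
    (Zbar M x ξ : ℝ) = (x : ℝ) - (Zcard M x ξ : ℝ) := by
  have := Zcard_add_Zbar hx ξ
  have : ((Zcard M x ξ + Zbar M x ξ : ℕ) : ℝ) = (x : ℝ) := by rw [this]
  push_cast at this
  linarith

lemma var_ident (a b m' : ℝ) (hd1 : b - 1 ≠ 0) (hd3 : b - 3 ≠ 0) :
    ((b - 3) * (a * ((b - a) * m')) + (a * (a - 1)) * ((b - a) * ((b - a - 1) * m')))
        / ((b - 1) * (b - 3))
      - 2 * (a * (b - a) / (b - 1)) * (a * ((b - a) * m') / (b - 1))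
      + m' * (a * (b - a) / (b - 1)) ^ 2
    = m' * (2 * (a * (b - a)) * ((a * (b - a)) - (b - 1))) / ((b - 1) ^ 2 * (b - 3)) := by
  field_simp
  ring

lemma var_bound (a b : ℝ) (ha1 : 1 ≤ a) (haM : a ≤ b - 1) (hb : 4 ≤ b) :
    2 * (a * (b - a)) * ((a * (b - a)) - (b - 1)) ≤ b * ((b - 1) ^ 2 * (b - 3)) := by
  have hb0 : (0 : ℝ) < b := by linarith
  have hA0 : (0 : ℝ) ≤ a * (b - a) := mul_nonneg (by linarith) (by linarith)
  have hA4 : 4 * (a * (b - a)) ≤ b ^ 2 := by nlinarith [sq_nonneg (2 * a - b)]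
  have ht : (0 : ℝ) ≤ b - 4 := by linarith
  have hpoly : b ^ 2 * b ^ 2 ≤ 8 * (b * ((b - 1) ^ 2 * (b - 3))) := by
    nlinarith [mul_nonneg (mul_nonneg (mul_nonneg ht ht) ht) hb0.le,
      mul_nonneg (mul_nonneg ht ht) hb0.le, mul_nonneg ht hb0.le, hb0.le]
  have hA2 : (4 * (a * (b - a))) * (4 * (a * (b - a))) ≤ b ^ 2 * b ^ 2 :=
    mul_le_mul hA4 hA4 (by linarith) (by positivity)
  have hAb1 : (0 : ℝ) ≤ (a * (b - a)) * (b - 1) := mul_nonneg hA0 (by linarith)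
  nlinarith [hA2, hpoly, hAb1]

lemma cheb (hM : 4 ≤ M) {x : ℕ} (hx : x ≤ M) {T : ℝ} (hT : 0 < T) :
    ((((matchings M).filter (fun ξ => T < |((x : ℝ) - (Zcard M x ξ : ℝ))
        - (x : ℝ) * ((M : ℝ) - (x : ℝ)) / ((M : ℝ) - 1)|)).card : ℝ)) * T ^ 2
      ≤ ((matchings M).card : ℝ) * (M : ℝ) := by
  classical
  have hb4 : (4 : ℝ) ≤ (M : ℝ) := by exact_mod_cast hM
  have hb0 : (0 : ℝ) < (M : ℝ) := by linarith
  have hm0 : (0 : ℝ) ≤ ((matchings M).card : ℝ) := by positivity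
  rcases Nat.eq_zero_or_pos x with hx0 | hx1
  · subst hx0
    have hempty : ((matchings M).filter (fun ξ => T < |(((0:ℕ) : ℝ) - (Zcard M 0 ξ : ℝ))
        - ((0:ℕ) : ℝ) * ((M : ℝ) - ((0:ℕ) : ℝ)) / ((M : ℝ) - 1)|)) = ∅ := by
      apply Finset.filter_false_of_mem
      intro ξ _
      have hz : Zcard M 0 ξ = 0 := by simp [Zcard]
      rw [hz]
      push_cast
      simp only [zero_mul, zero_div, sub_zero, sub_self, abs_zero, zero_sub, abs_neg]
      linarith
    rw [hempty]
    simp only [Finset.card_empty, Nat.cast_zero, zero_mul]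
    positivity
  rcases eq_or_lt_of_le hx with hxM | hxlt
  · subst hxM
    have hempty : ((matchings x).filter (fun ξ => T < |(((x:ℕ) : ℝ) - (Zcard x x ξ : ℝ))
        - ((x:ℕ) : ℝ) * (((x:ℕ) : ℝ) - ((x:ℕ) : ℝ)) / (((x:ℕ) : ℝ) - 1)|)) = ∅ := by
      apply Finset.filter_false_of_mem
      intro ξ _
      have hz : Zcard x x ξ = x := by
        rw [Zcard]
        have huniv : (Finset.univ.filter
            (fun i : Fin x => (i : ℕ) < x ∧ ((ξ i : Fin x) : ℕ) < x)) = Finset.univ := by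
          apply Finset.filter_true_of_mem
          intro i _
          exact ⟨i.isLt, (ξ i).isLt⟩
        rw [huniv, Finset.card_univ, Fintype.card_fin]
      rw [hz]
      simp only [sub_self, mul_zero, zero_mul, zero_div, sub_zero, abs_zero]
      linarith
    rw [hempty]
    simp only [Finset.card_empty, Nat.cast_zero, zero_mul]
    positivity
  · -- main case : 1 ≤ x < M
    have hx1' : (1 : ℝ) ≤ (x : ℝ) := by exact_mod_cast hx1
    have hd1 : (0 : ℝ) < (M : ℝ) - 1 := by linarith
    have hd3 : (0 : ℝ) < (M : ℝ) - 3 := by linarith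
    have haM : (x : ℝ) ≤ (M : ℝ) - 1 := by
      have : ((x : ℝ) + 1) ≤ (M : ℝ) := by exact_mod_cast hxlt
      linarith
    have hfeq : ((matchings M).filter (fun ξ => T < |((x : ℝ) - (Zcard M x ξ : ℝ))
          - (x : ℝ) * ((M : ℝ) - (x : ℝ)) / ((M : ℝ) - 1)|))
        = (matchings M).filter (fun ξ =>
            T < |(Zbar M x ξ : ℝ) - (x : ℝ) * ((M : ℝ) - (x : ℝ)) / ((M : ℝ) - 1)|) := by
      apply Finset.filter_congr
      intro ξ _
      rw [Zbar_cast hx ξ]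
    rw [hfeq]
    set a := (x : ℝ) with ha
    set b := (M : ℝ) with hb
    set m' := ((matchings M).card : ℝ) with hm'
    set μ := a * (b - a) / (b - 1) with hμ
    set F := (matchings M).filter (fun ξ => T < |(Zbar M x ξ : ℝ) - μ|) with hF
    have step1 : (F.card : ℝ) * T ^ 2 ≤ ∑ ξ ∈ matchings M, ((Zbar M x ξ : ℝ) - μ) ^ 2 := by
      have e1 : (F.card : ℝ) * T ^ 2 = ∑ _ξ ∈ F, T ^ 2 := by
        rw [Finset.sum_const, nsmul_eq_mul]
      rw [e1]
      apply le_trans (Finset.sum_le_sum ?_) (Finset.sum_le_sum_of_subset_of_nonneg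
        (Finset.filter_subset _ _) (fun ξ _ _ => sq_nonneg _))
      intro ξ hξ
      have hT' := (Finset.mem_filter.mp hξ).2
      calc T ^ 2 ≤ |(Zbar M x ξ : ℝ) - μ| ^ 2 := by
            apply pow_le_pow_left₀ hT.le hT'.le
        _ = ((Zbar M x ξ : ℝ) - μ) ^ 2 := sq_abs _
    have hc1 : ((M - 1 : ℕ) : ℝ) = b - 1 := by
      rw [Nat.cast_sub (show 1 ≤ M by omega), Nat.cast_one]
    have hc3 : ((M - 3 : ℕ) : ℝ) = b - 3 := by
      rw [Nat.cast_sub (show 3 ≤ M by omega)]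
      norm_num [hb]
    have hcx : ((M - x : ℕ) : ℝ) = b - a := by
      rw [Nat.cast_sub hx]
    have hcx1 : ((M - x - 1 : ℕ) : ℝ) = b - a - 1 := by
      rw [Nat.cast_sub (show 1 ≤ M - x by omega), hcx, Nat.cast_one]
    have hcxm : ((x - 1 : ℕ) : ℝ) = a - 1 := by
      rw [Nat.cast_sub hx1, Nat.cast_one]
    have hS1R : (b - 1) * ∑ ξ ∈ matchings M, (Zbar M x ξ : ℝ) = a * ((b - a) * m') := by
      have hcast := congrArg (Nat.cast : ℕ → ℝ) (S1 (M := M) (x := x) hx)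
      push_cast [hc1, hcx] at hcast
      exact hcast
    have hS2R : (b - 1) * ((b - 3) * ∑ ξ ∈ matchings M, (Zbar M x ξ : ℝ) * (Zbar M x ξ : ℝ))
        = (b - 3) * (a * ((b - a) * m'))
          + (a * (a - 1)) * ((b - a) * ((b - a - 1) * m')) := by
      have hcast := congrArg (Nat.cast : ℕ → ℝ) (S2 (M := M) (x := x) hM hx)
      push_cast [hc1, hc3, hcx, hcx1, hcxm] at hcast
      linarith [hcast]
    set SZ := ∑ ξ ∈ matchings M, (Zbar M x ξ : ℝ) with hSZ
    set SZ2 := ∑ ξ ∈ matchings M, (Zbar M x ξ : ℝ) * (Zbar M x ξ : ℝ) with hSZ2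
    have hZ1 : SZ = a * ((b - a) * m') / (b - 1) := by
      rw [eq_div_iff (ne_of_gt hd1)]
      linarith [hS1R]
    have hZ2 : SZ2 = ((b - 3) * (a * ((b - a) * m'))
        + (a * (a - 1)) * ((b - a) * ((b - a - 1) * m'))) / ((b - 1) * (b - 3)) := by
      rw [eq_div_iff (mul_ne_zero (ne_of_gt hd1) (ne_of_gt hd3))]
      linear_combination hS2R
    have hexp : ∑ ξ ∈ matchings M, ((Zbar M x ξ : ℝ) - μ) ^ 2
        = SZ2 - 2 * μ * SZ + m' * μ ^ 2 := by
      have h1 : ∀ ξ ∈ matchings M, ((Zbar M x ξ : ℝ) - μ) ^ 2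
          = (Zbar M x ξ : ℝ) * (Zbar M x ξ : ℝ) - 2 * μ * (Zbar M x ξ : ℝ) + μ ^ 2 :=
        fun ξ _ => by ring
      rw [Finset.sum_congr rfl h1, Finset.sum_add_distrib, Finset.sum_sub_distrib,
        ← Finset.mul_sum, Finset.sum_const, nsmul_eq_mul]
      try ring
    have hfinal : SZ2 - 2 * μ * SZ + m' * μ ^ 2 ≤ m' * b := by
      have hP : (0 : ℝ) < (b - 1) ^ 2 * (b - 3) := mul_pos (pow_pos hd1 2) hd3
      have hrw : SZ2 - 2 * μ * SZ + m' * μ ^ 2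
          = m' * (2 * (a * (b - a)) * ((a * (b - a)) - (b - 1)))
            / ((b - 1) ^ 2 * (b - 3)) := by
        rw [hZ1, hZ2, hμ]
        exact var_ident a b m' (ne_of_gt hd1) (ne_of_gt hd3)
      rw [hrw, div_le_iff₀ hP]
      calc m' * (2 * (a * (b - a)) * ((a * (b - a)) - (b - 1)))
          ≤ m' * (b * ((b - 1) ^ 2 * (b - 3))) :=
            mul_le_mul_of_nonneg_left (var_bound a b hx1' haM hb4) hm0
        _ = m' * b * ((b - 1) ^ 2 * (b - 3)) := by ring
    calc (F.card : ℝ) * T ^ 2 ≤ _ := step1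
      _ ≤ m' * b := by rw [hexp]; exact hfinal



end Stmt8Aux


open Stmt8Aux in
open Classical in
/-- There exists a constant `C > 0` such that for every even integer `M ≥ 4`, a
uniformly random perfect matching of `{1,…,M}` satisfies
`P[ max_{1 ≤ x ≤ M} | Z̄_x − x(M−x)/(M−1) | > C·M^{3/4} ] ≤ C·M^{−1/4}`,
where `Z̄_x = x − Z_x`. -/
theorem stmt8 : ∃ C : ℝ, 0 < C ∧ ∀ M : ℕ, 4 ≤ M → Even M →
    (((matchings M).filter (fun ξ => ∃ x, 1 ≤ x ∧ x ≤ M ∧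
        C * (M : ℝ) ^ ((3 : ℝ)/4) <
          |((x : ℝ) - (Zcard M x ξ : ℝ)) - (x : ℝ) * ((M : ℝ) - x) / ((M : ℝ) - 1)|)).card : ℝ)
      / ((matchings M).card : ℝ) ≤ C * (M : ℝ) ^ (-(1 : ℝ)/4) := by
  classical
  refine ⟨8, by norm_num, ?_⟩
  intro M hM hEven
  have hne := matchings_nonempty (by omega : 2 ≤ M) hEven
  have hmpos : (0 : ℝ) < ((matchings M).card : ℝ) := by
    exact_mod_cast Finset.card_pos.mpr hne
  have hb4 : (4 : ℝ) ≤ (M : ℝ) := by exact_mod_cast hM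
  have hb0 : (0 : ℝ) < (M : ℝ) := by linarith
  have hb1 : (1 : ℝ) ≤ (M : ℝ) := by linarith
  have hrp0 : (0 : ℝ) < (M : ℝ) ^ ((3 : ℝ)/4) := Real.rpow_pos_of_pos hb0 _
  have hrp1 : (1 : ℝ) ≤ (M : ℝ) ^ ((3 : ℝ)/4) := Real.one_le_rpow hb1 (by norm_num)
  set h := ⌈(M : ℝ) ^ ((3 : ℝ)/4)⌉₊ with hhdef
  have hhpos : 0 < h := Nat.ceil_pos.mpr hrp0
  have hh1 : (M : ℝ) ^ ((3 : ℝ)/4) ≤ (h : ℝ) := Nat.le_ceil _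
  have hh2 : (h : ℝ) ≤ 2 * (M : ℝ) ^ ((3 : ℝ)/4) := by
    have := Nat.ceil_lt_add_one (le_of_lt hrp0)
    rw [← hhdef] at this
    linarith
  set E := (matchings M).filter (fun ξ => ∃ x, 1 ≤ x ∧ x ≤ M ∧
      8 * (M : ℝ) ^ ((3 : ℝ)/4) <
        |((x : ℝ) - (Zcard M x ξ : ℝ)) - (x : ℝ) * ((M : ℝ) - x) / ((M : ℝ) - 1)|) with hE
  have hsub : E ⊆ (Finset.range (M / h + 1)).biUnion (fun j =>
      (matchings M).filter (fun ξ => 4 * (M : ℝ) ^ ((3 : ℝ)/4) <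
        |(((j * h : ℕ) : ℝ) - (Zcard M (j * h) ξ : ℝ))
          - ((j * h : ℕ) : ℝ) * ((M : ℝ) - ((j * h : ℕ) : ℝ)) / ((M : ℝ) - 1)|)) := by
    intro ξ hξ
    rw [hE, Finset.mem_filter] at hξ
    obtain ⟨hm, x, hx1, hxM, hdev⟩ := hξ
    rw [Finset.mem_biUnion]
    refine ⟨x / h, Finset.mem_range.mpr (Nat.lt_succ_of_le (Nat.div_le_div_right hxM)), ?_⟩
    rw [Finset.mem_filter]
    refine ⟨hm, ?_⟩
    have hgx : x / h * h ≤ x := Nat.div_mul_le_self x h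
    have hxlt : x < x / h * h + h := Nat.lt_div_mul_add hhpos
    have hgapR : (x : ℝ) - ((x / h * h : ℕ) : ℝ) ≤ (h : ℝ) := by
      have h1 : ((x : ℕ) : ℝ) ≤ ((x / h * h + h : ℕ) : ℝ) := by exact_mod_cast hxlt.le
      push_cast at h1 ⊢
      linarith
    have hlip := D_lip (by omega : 2 ≤ M) hm hgx hxM
    have habs := abs_sub_abs_le_abs_sub
      (((x : ℝ) - (Zcard M x ξ : ℝ)) - (x : ℝ) * ((M : ℝ) - (x : ℝ)) / ((M : ℝ) - 1))
      ((((x / h * h : ℕ) : ℝ) - (Zcard M (x / h * h) ξ : ℝ))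
        - ((x / h * h : ℕ) : ℝ) * ((M : ℝ) - ((x / h * h : ℕ) : ℝ)) / ((M : ℝ) - 1))
    linarith
  have hsq : (4 * (M : ℝ) ^ ((3 : ℝ)/4)) ^ 2 = 16 * (M : ℝ) ^ ((3 : ℝ)/2) := by
    rw [mul_pow, ← Real.rpow_natCast ((M : ℝ) ^ ((3 : ℝ)/4)) 2, ← Real.rpow_mul hb0.le]
    norm_num
  have hT4 : (0 : ℝ) < 4 * (M : ℝ) ^ ((3 : ℝ)/4) := by positivity
  have hcount : (E.card : ℝ) * (16 * (M : ℝ) ^ ((3 : ℝ)/2))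
      ≤ ((M / h + 1 : ℕ) : ℝ) * (((matchings M).card : ℝ) * (M : ℝ)) := by
    have hc1 : (E.card : ℝ) ≤ ∑ j ∈ Finset.range (M / h + 1),
        (((matchings M).filter (fun ξ => 4 * (M : ℝ) ^ ((3 : ℝ)/4) <
          |(((j * h : ℕ) : ℝ) - (Zcard M (j * h) ξ : ℝ))
            - ((j * h : ℕ) : ℝ) * ((M : ℝ) - ((j * h : ℕ) : ℝ)) / ((M : ℝ) - 1)|)).card : ℝ) := by
      have := le_trans (Finset.card_le_card hsub) (Finset.card_biUnion_le)
      exact_mod_cast this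
    calc (E.card : ℝ) * (16 * (M : ℝ) ^ ((3 : ℝ)/2))
        ≤ (∑ j ∈ Finset.range (M / h + 1),
            (((matchings M).filter (fun ξ => 4 * (M : ℝ) ^ ((3 : ℝ)/4) <
              |(((j * h : ℕ) : ℝ) - (Zcard M (j * h) ξ : ℝ))
                - ((j * h : ℕ) : ℝ) * ((M : ℝ) - ((j * h : ℕ) : ℝ)) / ((M : ℝ) - 1)|)).card : ℝ))
            * (16 * (M : ℝ) ^ ((3 : ℝ)/2)) := by
          apply mul_le_mul_of_nonneg_right hc1 (by positivity)
      _ = ∑ j ∈ Finset.range (M / h + 1),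
            (((matchings M).filter (fun ξ => 4 * (M : ℝ) ^ ((3 : ℝ)/4) <
              |(((j * h : ℕ) : ℝ) - (Zcard M (j * h) ξ : ℝ))
                - ((j * h : ℕ) : ℝ) * ((M : ℝ) - ((j * h : ℕ) : ℝ)) / ((M : ℝ) - 1)|)).card : ℝ)
            * ((4 * (M : ℝ) ^ ((3 : ℝ)/4)) ^ 2) := by
          rw [Finset.sum_mul, hsq]
      _ ≤ ∑ _j ∈ Finset.range (M / h + 1), ((matchings M).card : ℝ) * (M : ℝ) := by
          apply Finset.sum_le_sum
          intro j hj
          have hjM : j * h ≤ M := by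
            have hj' : j ≤ M / h := Nat.lt_succ_iff.mp (Finset.mem_range.mp hj)
            calc j * h ≤ (M / h) * h := Nat.mul_le_mul_right h hj'
              _ ≤ M := Nat.div_mul_le_self M h
          exact cheb hM hjM hT4
      _ = ((M / h + 1 : ℕ) : ℝ) * (((matchings M).card : ℝ) * (M : ℝ)) := by
          rw [Finset.sum_const, nsmul_eq_mul, Finset.card_range]
  have hgrid : ((M / h + 1 : ℕ) : ℝ) ≤ 2 * (M : ℝ) ^ ((1 : ℝ)/4) := by
    have hA : ((M / h : ℕ) : ℝ) ≤ (M : ℝ) / (h : ℝ) := Nat.cast_div_le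
    have hB : (M : ℝ) / (h : ℝ) ≤ (M : ℝ) / ((M : ℝ) ^ ((3 : ℝ)/4)) :=
      div_le_div_of_nonneg_left hb0.le hrp0 hh1
    have hC : (M : ℝ) / ((M : ℝ) ^ ((3 : ℝ)/4)) = (M : ℝ) ^ ((1 : ℝ)/4) := by
      rw [show ((1 : ℝ)/4) = 1 - (3 : ℝ)/4 by norm_num, Real.rpow_sub hb0, Real.rpow_one]
    have hD : (1 : ℝ) ≤ (M : ℝ) ^ ((1 : ℝ)/4) := Real.one_le_rpow hb1 (by norm_num)
    push_cast
    rw [hC] at hB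
    linarith
  rw [div_le_iff₀ hmpos]
  have hpos32 : (0 : ℝ) < 16 * (M : ℝ) ^ ((3 : ℝ)/2) := by positivity
  apply le_of_mul_le_mul_right _ hpos32
  have e1 : (M : ℝ) ^ ((1 : ℝ)/4) * (M : ℝ) = (M : ℝ) ^ ((5 : ℝ)/4) := by
    nth_rewrite 2 [← Real.rpow_one (M : ℝ)]
    rw [← Real.rpow_add hb0]
    norm_num
  have e2 : (M : ℝ) ^ (-(1 : ℝ)/4) * (M : ℝ) ^ ((3 : ℝ)/2) = (M : ℝ) ^ ((5 : ℝ)/4) := by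
    rw [← Real.rpow_add hb0]
    norm_num
  have hrp54 : (0 : ℝ) ≤ (M : ℝ) ^ ((5 : ℝ)/4) := by positivity
  calc (E.card : ℝ) * (16 * (M : ℝ) ^ ((3 : ℝ)/2))
      ≤ ((M / h + 1 : ℕ) : ℝ) * (((matchings M).card : ℝ) * (M : ℝ)) := hcount
    _ ≤ (2 * (M : ℝ) ^ ((1 : ℝ)/4)) * (((matchings M).card : ℝ) * (M : ℝ)) :=
        mul_le_mul_of_nonneg_right hgrid (by positivity)
    _ = 2 * ((matchings M).card : ℝ) * ((M : ℝ) ^ ((1 : ℝ)/4) * (M : ℝ)) := by ring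
    _ = 2 * ((matchings M).card : ℝ) * (M : ℝ) ^ ((5 : ℝ)/4) := by rw [e1]
    _ ≤ 128 * ((matchings M).card : ℝ) * (M : ℝ) ^ ((5 : ℝ)/4) := by
        have hprod : (0 : ℝ) ≤ ((matchings M).card : ℝ) * (M : ℝ) ^ ((5 : ℝ)/4) :=
          mul_nonneg hmpos.le hrp54
        nlinarith [hprod]
    _ = 8 * (M : ℝ) ^ (-(1 : ℝ)/4) * ((matchings M).card : ℝ)
          * (16 * (M : ℝ) ^ ((3 : ℝ)/2)) := by
        rw [← e2]
        ring
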